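/- Let n = p_1^{n_1}⋯p_r^{n_r} with p_1 < ... < p_r primes, and let a, b ∈ [r] with a ≠ b, s < n_a and t < n_b. Then ∑_{k=1}^{s}∑_{l=1}^{t} φ(n/(p_a^k p_b^l)) = (n/(p_1⋯p_r))·φ(p_1⋯p_r/(p_a p_b))·(1 - 1/p_a^s)·(1 - 1/p_b^t). -/

import Mathlib

open Finset

lemma my_totient_prod (S : Finset ℕ) (g : ℕ → ℕ)
    (h : ∀ i ∈ S, ∀ j ∈ S, i ≠ j → Nat.Coprime (g i) (g j)) :
    Nat.totient (∏ i ∈ S, g i) = ∏ i ∈ S, Nat.totient (g i) := by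
  induction S using Finset.cons_induction with
  | empty => simp
  | cons a S haS ih =>
    rw [Finset.prod_cons, Finset.prod_cons, Nat.totient_mul, ih]
    · intro i hi j hj hij
      exact h i (Finset.mem_cons_of_mem hi) j (Finset.mem_cons_of_mem hj) hij
    · exact Nat.Coprime.prod_right fun j hj =>
        h a (Finset.mem_cons_self a S) j (Finset.mem_cons_of_mem hj)
          (fun e => haS (e ▸ hj))

lemma my_geom (q : ℕ) (hq : 2 ≤ q) (s : ℕ) :
    ∑ k ∈ Finset.Icc 1 s, (1 / (q : ℚ)) ^ k = (1 - (1 / (q:ℚ)) ^ s) / ((q:ℚ) - 1) := by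
  have hq1 : (1:ℚ) < q := by exact_mod_cast hq
  have hq0 : (q:ℚ) ≠ 0 := by positivity
  have hqne : (q:ℚ) - 1 ≠ 0 := by intro h; nlinarith
  induction s with
  | zero => simp
  | succ s ih =>
    rw [Finset.sum_Icc_succ_top (by omega), ih]
    field_simp
    linear_combination ((q:ℚ)⁻¹) ^ s * (mul_inv_cancel₀ hq0)

theorem stmt_7 (r : ℕ) (hr : 2 ≤ r) (p e : ℕ → ℕ)
    (hp : ∀ i < r, (p i).Prime)
    (hmono : ∀ i j, i < j → j < r → p i < p j)
    (he : ∀ i < r, 1 ≤ e i)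
    (n : ℕ) (hn : n = ∏ i ∈ Finset.range r, p i ^ e i)
    (P : ℕ) (hP : P = ∏ i ∈ Finset.range r, p i)
    (a b : ℕ) (ha : a < r) (hb : b < r) (hab : a ≠ b)
    (s t : ℕ) (hs1 : 1 ≤ s) (ht1 : 1 ≤ t) (hs : s < e a) (ht : t < e b) :
    (∑ k ∈ Finset.Icc 1 s, ∑ l ∈ Finset.Icc 1 t,
        (Nat.totient (n / (p a ^ k * p b ^ l)) : ℚ)) =
      (n : ℚ) / P * Nat.totient (P / (p a * p b)) *
        (1 - 1 / (p a : ℚ) ^ s) * (1 - 1 / (p b : ℚ) ^ t) := by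
  have hpne : ∀ i ∈ range r, ∀ j ∈ range r, i ≠ j → p i ≠ p j := by
    intro i hi j hj hij
    rcases lt_or_gt_of_ne hij with h | h
    · exact (hmono i j h (mem_range.mp hj)).ne
    · exact (hmono j i h (mem_range.mp hi)).ne'
  have hpp : ∀ i ∈ range r, (p i).Prime := fun i hi => hp i (mem_range.mp hi)
  have hp2 : ∀ i ∈ range r, 2 ≤ p i := fun i hi => (hpp i hi).two_le
  have hpa2 : 2 ≤ p a := hp2 a (mem_range.mpr ha)
  have hpb2 : 2 ≤ p b := hp2 b (mem_range.mpr hb)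
  have hpaQ : (2:ℚ) ≤ p a := by exact_mod_cast hpa2
  have hpbQ : (2:ℚ) ≤ p b := by exact_mod_cast hpb2
  have hpa0 : (p a : ℚ) ≠ 0 := by positivity
  have hpb0 : (p b : ℚ) ≠ 0 := by positivity
  have hpa1 : (p a : ℚ) - 1 ≠ 0 := by intro h; nlinarith
  have hpb1 : (p b : ℚ) - 1 ≠ 0 := by intro h; nlinarith
  set C : ℚ := ∏ i ∈ range r, ((p i : ℚ) ^ (e i - 1) * ((p i : ℚ) - 1)) with hC
  -- the per-term value
  have hterm : ∀ k ∈ Icc 1 s, ∀ l ∈ Icc 1 t,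
      (Nat.totient (n / (p a ^ k * p b ^ l)) : ℚ)
        = C * (1 / (p a : ℚ)) ^ k * (1 / (p b : ℚ)) ^ l := by
    intro k hk l hl
    obtain ⟨hk1, hks⟩ := mem_Icc.mp hk
    obtain ⟨hl1, hlt⟩ := mem_Icc.mp hl
    set g : ℕ → ℕ := fun i => if i = a then k else if i = b then l else 0 with hg
    have hga : g a = k := if_pos rfl
    have hgb : g b = l := by simp [hg, hab.symm]
    have hgle : ∀ i ∈ range r, g i + 1 ≤ e i := by
      intro i hi
      by_cases h1 : i = a
      · subst h1; rw [hga]; omega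
      · by_cases h2 : i = b
        · subst h2; rw [hgb]; omega
        · simp only [hg, if_neg h1, if_neg h2]
          exact he i (mem_range.mp hi)
    have hprodg : ∀ (K : Type) [inst : CommMonoid K] (q : ℕ → K),
        ∏ i ∈ range r, q i ^ g i = q a ^ k * q b ^ l := by
      intro K inst q
      rw [← Finset.mul_prod_erase _ (fun i => q i ^ g i) (mem_range.mpr ha),
        ← Finset.mul_prod_erase _ _
          (Finset.mem_erase.mpr ⟨Ne.symm hab, mem_range.mpr hb⟩)]
      have h3 : ∏ i ∈ ((range r).erase a).erase b, q i ^ g i = 1 := by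
        apply Finset.prod_eq_one
        intro i hi
        have h4 := (Finset.mem_erase.mp hi).1
        have h5 := (Finset.mem_erase.mp (Finset.mem_erase.mp hi).2).1
        simp [hg, h4, h5]
      rw [h3, hga, hgb, mul_one]
    have hndiv : n = (∏ i ∈ range r, p i ^ (e i - g i)) * (p a ^ k * p b ^ l) := by
      rw [← hprodg ℕ p, ← Finset.prod_mul_distrib, hn]
      apply Finset.prod_congr rfl
      intro i hi
      rw [← pow_add]
      congr 1
      have := hgle i hi
      omega
    have hpos : 0 < p a ^ k * p b ^ l := by positivity
    have hdiv : n / (p a ^ k * p b ^ l) = ∏ i ∈ range r, p i ^ (e i - g i) := by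
      rw [hndiv, Nat.mul_div_cancel _ hpos]
    rw [hdiv, my_totient_prod]
    · push_cast
      have hstep : ∀ i ∈ range r,
          (Nat.totient (p i ^ (e i - g i)) : ℚ)
            = (p i : ℚ) ^ (e i - 1) * ((p i : ℚ) - 1) * ((1 : ℚ) / (p i : ℚ)) ^ g i := by
        intro i hi
        have hgi := hgle i hi
        have hpi0 : (p i : ℚ) ≠ 0 := by
          have := hp2 i hi; positivity
        rw [Nat.totient_prime_pow (hpp i hi) (by omega)]
        have hcast : ((p i ^ (e i - g i - 1) * (p i - 1) : ℕ) : ℚ)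
            = (p i : ℚ) ^ (e i - g i - 1) * ((p i : ℚ) - 1) := by
          push_cast [Nat.cast_sub (by linarith [hp2 i hi] : 1 ≤ p i)]
          ring
        rw [hcast]
        have hpow : (p i : ℚ) ^ (e i - 1) = (p i : ℚ) ^ (e i - g i - 1) * (p i : ℚ) ^ g i := by
          rw [← pow_add]
          congr 1
          omega
        rw [hpow]
        field_simp
        have hx : (p i:ℚ) ^ g i * ((p i:ℚ)⁻¹) ^ g i = 1 := by
          rw [← mul_pow, mul_inv_cancel₀ hpi0, one_pow]
        linear_combination (1 - (p i:ℚ)) * hx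
      rw [Finset.prod_congr rfl hstep, Finset.prod_mul_distrib, ← hC, hprodg ℚ (fun i => 1 / (p i : ℚ))]
      ring
    · intro i hi j hj hij
      exact ((Nat.coprime_primes (hpp i hi) (hpp j hj)).mpr (hpne i hi j hj hij)).pow _ _
  -- sum it up
  have hLHS : (∑ k ∈ Finset.Icc 1 s, ∑ l ∈ Finset.Icc 1 t,
      (Nat.totient (n / (p a ^ k * p b ^ l)) : ℚ))
      = C * ((1 - (1/(p a:ℚ))^s) / ((p a:ℚ) - 1)) * ((1 - (1/(p b:ℚ))^t) / ((p b:ℚ) - 1)) := by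
    rw [Finset.sum_congr rfl (fun k hk => Finset.sum_congr rfl (fun l hl => hterm k hk l hl))]
    rw [← my_geom (p a) hpa2 s, ← my_geom (p b) hpb2 t]
    rw [mul_assoc, Finset.sum_mul_sum, Finset.mul_sum]
    refine Finset.sum_congr rfl fun k _ => ?_
    rw [Finset.mul_sum]
    exact Finset.sum_congr rfl fun l _ => by ring
  rw [hLHS]
  -- now compute the RHS pieces
  have hEpos : ∀ i ∈ range r, 1 ≤ e i := fun i hi => he i (mem_range.mp hi)
  have hnPnat : n = P * ∏ i ∈ range r, p i ^ (e i - 1) := by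
    rw [hn, hP, ← Finset.prod_mul_distrib]
    apply Finset.prod_congr rfl
    intro i hi
    rw [← pow_succ']
    congr 1
    have := hEpos i hi
    omega
  have hP0 : (P : ℚ) ≠ 0 := by
    rw [hP]
    push_cast
    apply Finset.prod_ne_zero_iff.mpr
    intro i hi
    have := hp2 i hi
    positivity
  have hnP : (n : ℚ) / P = ∏ i ∈ range r, (p i : ℚ) ^ (e i - 1) := by
    rw [hnPnat]
    push_cast
    field_simp
  have hPabnat : P = (p a * p b) * ∏ i ∈ ((range r).erase a).erase b, p i := by
    rw [hP, ← Finset.mul_prod_erase _ p (mem_range.mpr ha),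
      ← Finset.mul_prod_erase _ p (Finset.mem_erase.mpr ⟨Ne.symm hab, mem_range.mpr hb⟩)]
    ring
  have hPdiv : P / (p a * p b) = ∏ i ∈ ((range r).erase a).erase b, p i := by
    rw [hPabnat, Nat.mul_div_cancel_left _ (by positivity)]
  have hsub : ∀ i ∈ ((range r).erase a).erase b, i ∈ range r := by
    intro i hi
    exact Finset.mem_of_mem_erase (Finset.mem_of_mem_erase hi)
  have htotP : (Nat.totient (P / (p a * p b)) : ℚ)
      = ∏ i ∈ ((range r).erase a).erase b, ((p i : ℚ) - 1) := by
    rw [hPdiv, my_totient_prod]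
    · push_cast
      apply Finset.prod_congr rfl
      intro i hi
      rw [Nat.totient_prime (hpp i (hsub i hi))]
      have := hp2 i (hsub i hi)
      push_cast [Nat.cast_sub (by omega : 1 ≤ p i)]
      ring
    · intro i hi j hj hij
      exact (Nat.coprime_primes (hpp i (hsub i hi)) (hpp j (hsub j hj))).mpr
        (hpne i (hsub i hi) j (hsub j hj) hij)
  have hCsplit : C = (∏ i ∈ range r, (p i : ℚ) ^ (e i - 1))
      * (((p a : ℚ) - 1) * (((p b : ℚ) - 1)
        * ∏ i ∈ ((range r).erase a).erase b, ((p i : ℚ) - 1))) := by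
    rw [hC, Finset.prod_mul_distrib]
    congr 1
    rw [← Finset.mul_prod_erase _ (fun i => (p i : ℚ) - 1) (mem_range.mpr ha),
      ← Finset.mul_prod_erase _ _ (Finset.mem_erase.mpr ⟨Ne.symm hab, mem_range.mpr hb⟩)]
  rw [hnP, htotP, hCsplit]
  have h1 : (1:ℚ) / (p a:ℚ) ^ s = ((1:ℚ)/(p a:ℚ))^s := by rw [div_pow, one_pow]
  have h2 : (1:ℚ) / (p b:ℚ) ^ t = ((1:ℚ)/(p b:ℚ))^t := by rw [div_pow, one_pow]
  rw [h1, h2]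
  field_simp
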